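/- The map T : (0,1] → (0,1], defined on each interval B(k,ξ) by T(α) = ξ(1/α - 2k), preserves the σ-finite infinite measure μ_T with density φ_T(α) = 1/(α+1) - 1/(α-1) with respect to Lebesgue measure on (0,1]. -/

import Mathlib

open MeasureTheory Set Filter Topology ENNReal

/-- The σ-finite infinite measure `μ_T` on `(0,1]` with density
`φ_T(α) = 1/(α+1) - 1/(α-1)` with respect to Lebesgue measure. -/
noncomputable def muT : Measure ℝ :=
  (volume.restrict (Set.Ioc (0:ℝ) 1)).withDensity
    (fun α => ENNReal.ofReal (1 / (α + 1) - 1 / (α - 1)))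

theorem my_lintegral_image {s : Set ℝ} {f f' : ℝ → ℝ} (hs : MeasurableSet s)
    (hf' : ∀ x ∈ s, HasDerivWithinAt f (f' x) s x) (hf : Set.InjOn f s) (g : ℝ → ℝ≥0∞) :
    ∫⁻ x in f '' s, g x = ∫⁻ x in s, ENNReal.ofReal |f' x| * g (f x) := by
  simpa only [ContinuousLinearMap.det_toSpanSingleton] using
    lintegral_image_eq_lintegral_abs_det_fderiv_mul volume hs
      (fun x hx => (hf' x hx).hasFDerivWithinAt) hf g

theorem telescope2 (c : ℕ → ℝ) (hc : ∀ n, c (n+2) ≤ c n)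
    (hlim : Tendsto c atTop (𝓝 0)) : HasSum (fun n => c n - c (n+2)) (c 0 + c 1) := by
  have key : ∀ N, ∑ n ∈ Finset.range N, (c n - c (n+2)) = c 0 + c 1 - c N - c (N+1) := by
    intro N
    induction N with
    | zero => simp
    | succ N ih => rw [Finset.sum_range_succ, ih]; ring
  rw [hasSum_iff_tendsto_nat_of_nonneg (fun n => sub_nonneg.2 (hc n))]
  simp only [key]
  have h1 : Tendsto (fun N => c (N+1)) atTop (𝓝 0) := hlim.comp (tendsto_add_atTop_nat 1)
  have := ((tendsto_const_nhds (x := c 0 + c 1)).sub hlim).sub h1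
  simpa using this

/-- The branch denominator: `n+2-y` for even `n`, `n+1+y` for odd `n`. -/
noncomputable def tden (n : ℕ) (y : ℝ) : ℝ :=
  if n % 2 = 0 then (n:ℝ) + 2 - y else (n:ℝ) + 1 + y

/-- The branch inverse map `(0,1) → (0,1]`. -/
noncomputable def gmap (n : ℕ) (y : ℝ) : ℝ := 1 / tden n y

lemma tden_mem {n : ℕ} {y : ℝ} (hy : y ∈ Set.Ioo (0:ℝ) 1) :
    tden n y ∈ Set.Ioo ((n:ℝ)+1) ((n:ℝ)+2) := by
  obtain ⟨h0, h1⟩ := hy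
  unfold tden
  split_ifs <;> constructor <;> linarith

lemma tden_pos {n : ℕ} {y : ℝ} (hy : y ∈ Set.Ioo (0:ℝ) 1) : (1:ℝ) < tden n y := by
  have := (tden_mem (n := n) hy).1
  have : (0:ℝ) ≤ (n:ℝ) := Nat.cast_nonneg n
  have := (tden_mem (n := n) hy).1
  linarith

lemma gmap_mem {n : ℕ} {y : ℝ} (hy : y ∈ Set.Ioo (0:ℝ) 1) :
    gmap n y ∈ Set.Ioo (1/((n:ℝ)+2)) (1/((n:ℝ)+1)) := by
  obtain ⟨hl, hu⟩ := tden_mem (n := n) hy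
  have hn1 : (0:ℝ) < (n:ℝ)+1 := by positivity
  have hn2 : (0:ℝ) < (n:ℝ)+2 := by positivity
  have ht : (0:ℝ) < tden n y := lt_trans hn1 hl
  constructor
  · exact one_div_lt_one_div_of_lt ht hu
  · exact one_div_lt_one_div_of_lt hn1 hl

theorem T_preserves_muT (T : ℝ → ℝ)
    (hT1 : ∀ k : ℕ, 1 ≤ k → ∀ α ∈ Set.Ioc (1 / (2 * (k:ℝ))) (1 / (2 * (k:ℝ) - 1)),
      T α = 2 * (k:ℝ) - 1 / α)
    (hT2 : ∀ k : ℕ, 1 ≤ k → ∀ α ∈ Set.Ioc (1 / (2 * (k:ℝ) + 1)) (1 / (2 * (k:ℝ))),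
      T α = 1 / α - 2 * (k:ℝ)) :
    ∀ A : Set ℝ, MeasurableSet A → A ⊆ Set.Ioc 0 1 →
      muT (T ⁻¹' A ∩ Set.Ioc 0 1) = muT A := by
  intro A hA hAsub
  -- basic facts about muT
  have muT_apply : ∀ s : Set ℝ, MeasurableSet s → s ⊆ Set.Ioc 0 1 →
      muT s = ∫⁻ x in s, ENNReal.ofReal (1 / (x + 1) - 1 / (x - 1)) := by
    intro s hs hsub
    rw [muT, withDensity_apply _ hs, Measure.restrict_restrict hs,
      inter_eq_self_of_subset_left hsub]
  have muT_null : ∀ s : Set ℝ, s.Countable → muT s = 0 := by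
    intro s hs
    rw [muT]
    refine withDensity_absolutelyContinuous _ _ ?_
    rw [Measure.restrict_apply hs.measurableSet]
    exact measure_mono_null inter_subset_left (hs.measure_zero _)
  -- replace A by A' = A \ {1}
  set A' : Set ℝ := A \ {1} with hA'def
  have hA' : MeasurableSet A' := hA.diff (measurableSet_singleton 1)
  have hA'sub : A' ⊆ Set.Ioo 0 1 := by
    rintro x ⟨hx, hx1⟩
    exact ⟨(hAsub hx).1, lt_of_le_of_ne (hAsub hx).2 hx1⟩
  have hAA' : muT A = muT A' := by
    refine le_antisymm ?_ (measure_mono diff_subset)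
    calc muT A ≤ muT (A' ∪ {1}) := measure_mono (by intro x hx; by_cases h : x = 1 <;> simp [A', h, hx])
    _ ≤ muT A' + muT {1} := measure_union_le _ _
    _ = muT A' := by rw [muT_null {1} (countable_singleton 1), add_zero]
  -- the branch decomposition of (0,1]
  have branch : ∀ α ∈ Set.Ioc (0:ℝ) 1,
      (∃ k : ℕ, 1 ≤ k ∧ α ∈ Set.Ioc (1 / (2 * (k:ℝ))) (1 / (2 * (k:ℝ) - 1))) ∨
      (∃ k : ℕ, 1 ≤ k ∧ α ∈ Set.Ioc (1 / (2 * (k:ℝ) + 1)) (1 / (2 * (k:ℝ)))) := by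
    intro α hα
    have hα0 : 0 < α := hα.1
    have h1 : 1 ≤ 1/α := one_le_one_div hα0 hα.2
    set m := ⌊1/α⌋₊ with hm
    have hm1 : 1 ≤ m := Nat.le_floor (by exact_mod_cast h1)
    have hml : (m:ℝ) ≤ 1/α := Nat.floor_le (by positivity)
    have hmu : 1/α < (m:ℝ) + 1 := Nat.lt_floor_add_one _
    have hm0 : (0:ℝ) < m := by exact_mod_cast hm1
    have hml' : (m:ℝ) * α ≤ 1 := (le_div_iff₀ hα0).1 hml
    have hmu' : 1 < ((m:ℝ) + 1) * α := by
      have := (div_lt_iff₀ hα0).1 hmu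
      linarith
    have hαu : α ≤ 1/(m:ℝ) := (le_div_iff₀ hm0).2 (by linarith)
    have hαl : 1/((m:ℝ)+1) < α := (div_lt_iff₀ (by positivity)).2 (by linarith)
    rcases Nat.even_or_odd m with ⟨j, hj⟩ | ⟨j, hj⟩
    · -- m = j + j even, +1 branch with k = j
      right
      have hj1 : 1 ≤ j := by omega
      have hjr : (m:ℝ) = 2 * (j:ℝ) := by rw [hj]; push_cast; ring
      exact ⟨j, hj1, by rw [← hjr]; constructor <;> [linarith; linarith]⟩
    · -- m = 2j+1 odd, -1 branch with k = j+1
      left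
      have hjr : (m:ℝ) = 2 * ((j:ℝ)+1) - 1 := by rw [hj]; push_cast; ring
      refine ⟨j+1, by omega, ?_⟩
      have h2 : ((j:ℝ)+1) = ((j+1:ℕ):ℝ) := by push_cast; ring
      rw [← h2]
      constructor
      · have : 2*((j:ℝ)+1) = (m:ℝ)+1 := by rw [hjr]; ring
        rw [this]; linarith
      · rw [← hjr]; linarith
  -- Step: reduce preimage of A to preimage of A'
  have hpre : muT (T ⁻¹' A ∩ Set.Ioc 0 1) = muT (T ⁻¹' A' ∩ Set.Ioc 0 1) := by
    set C : Set ℝ := Set.range (fun k : ℕ => 1 / (2*(k:ℝ) - 1)) with hC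
    have hCc : C.Countable := countable_range _
    refine le_antisymm ?_ (measure_mono (inter_subset_inter_left _ (preimage_mono diff_subset)))
    have hsub1 : T ⁻¹' A ∩ Set.Ioc 0 1 ⊆ (T ⁻¹' A' ∩ Set.Ioc 0 1) ∪ C := by
      rintro α ⟨hTA, hα⟩
      by_cases hT1' : T α = 1
      · right
        rcases branch α hα with ⟨k, hk, hmem⟩ | ⟨k, hk, hmem⟩
        · have hval := hT1 k hk α hmem
          have hinv : 1/α = 2*(k:ℝ) - 1 := by rw [hval] at hT1'; linarith
          refine ⟨k, ?_⟩
          show 1/(2*(k:ℝ)-1) = α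
          rw [← hinv, one_div_one_div]
        · exfalso
          have hval := hT2 k hk α hmem
          have hinv : 1/α = 2*(k:ℝ) + 1 := by rw [hval] at hT1'; linarith
          have hlt : 1/α < 2*(k:ℝ)+1 := by
            have h := one_div_lt_one_div_of_lt (by positivity) hmem.1
            rwa [one_div_one_div] at h
          linarith
      · exact Or.inl ⟨⟨hTA, hT1'⟩, hα⟩
    calc muT (T ⁻¹' A ∩ Set.Ioc 0 1) ≤ muT ((T ⁻¹' A' ∩ Set.Ioc 0 1) ∪ C) := measure_mono hsub1
      _ ≤ muT (T ⁻¹' A' ∩ Set.Ioc 0 1) + muT C := measure_union_le _ _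
      _ = muT (T ⁻¹' A' ∩ Set.Ioc 0 1) := by rw [muT_null C hCc, add_zero]
  -- Step: decompose the preimage of A' into branch images
  have decomp : T ⁻¹' A' ∩ Set.Ioc 0 1 = ⋃ n, gmap n '' A' := by
    ext α
    constructor
    · rintro ⟨hTα, hα⟩
      rcases branch α hα with ⟨k, hk, hmem⟩ | ⟨k, hk, hmem⟩
      · have hval := hT1 k hk α hmem
        refine mem_iUnion.2 ⟨2*(k-1), ⟨T α, hTα, ?_⟩⟩
        have hk2 : ((2*(k-1):ℕ):ℝ) = 2*(k:ℝ) - 2 := by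
          have h2 : 2*(k-1) = 2*k - 2 := by omega
          rw [h2, Nat.cast_sub (by omega)]
          push_cast; ring
        have hpar : (2*(k-1)) % 2 = 0 := by omega
        rw [gmap, tden, if_pos hpar, hk2, hval,
          show 2*(k:ℝ) - 2 + 2 - (2*(k:ℝ) - 1/α) = 1/α from by ring, one_div_one_div]
      · have hval := hT2 k hk α hmem
        refine mem_iUnion.2 ⟨2*k-1, ⟨T α, hTα, ?_⟩⟩
        have hk2 : ((2*k-1:ℕ):ℝ) = 2*(k:ℝ) - 1 := by
          rw [Nat.cast_sub (by omega)]
          push_cast; ring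
        have hpar : ¬ ((2*k-1) % 2 = 0) := by omega
        rw [gmap, tden, if_neg hpar, hk2, hval,
          show 2*(k:ℝ) - 1 + 1 + (1/α - 2*(k:ℝ)) = 1/α from by ring, one_div_one_div]
    · intro hmem
      rcases mem_iUnion.1 hmem with ⟨n, y, hyA', rfl⟩
      have hy : y ∈ Set.Ioo (0:ℝ) 1 := hA'sub hyA'
      have ht := tden_mem (n := n) hy
      have htpos : (0:ℝ) < tden n y := lt_trans (by positivity) ht.1
      have hgIoc : gmap n y ∈ Set.Ioc 0 1 := by
        constructor
        · rw [gmap]; positivity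
        · rw [gmap, div_le_one htpos]
          have := Nat.cast_nonneg (α := ℝ) n
          linarith [ht.1]
      refine ⟨?_, hgIoc⟩
      show T (gmap n y) ∈ A'
      have hone : (1:ℝ)/(gmap n y) = tden n y := by rw [gmap, one_div_one_div]
      rcases Nat.even_or_odd n with ⟨j, hj⟩ | ⟨j, hj⟩
      · have hpar : n % 2 = 0 := by omega
        have hcast : (n:ℝ) + 2 = 2*((j+1:ℕ):ℝ) := by
          push_cast
          have : (n:ℝ) = 2*(j:ℝ) := by exact_mod_cast congrArg (Nat.cast (R := ℝ)) (by omega : n = 2*j)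
          linarith
        have htv : tden n y = 2*((j+1:ℕ):ℝ) - y := by rw [tden, if_pos hpar, ← hcast]
        have hmem' : gmap n y ∈ Set.Ioc (1/(2*((j+1:ℕ):ℝ))) (1/(2*((j+1:ℕ):ℝ)-1)) := by
          constructor
          · apply one_div_lt_one_div_of_lt htpos
            rw [htv]; linarith [hy.1]
          · apply one_div_le_one_div_of_le (by rw [← hcast]; have := Nat.cast_nonneg (α := ℝ) n; linarith)
            rw [htv]; linarith [hy.2]
        have hval := hT1 (j+1) (by omega) _ hmem'
        rw [hval, hone, htv, show 2*((j+1:ℕ):ℝ) - (2*((j+1:ℕ):ℝ) - y) = y from by ring]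
        exact hyA'
      · have hpar : ¬ (n % 2 = 0) := by omega
        have hcast : (n:ℝ) + 1 = 2*((j+1:ℕ):ℝ) := by
          push_cast
          have : (n:ℝ) = 2*(j:ℝ)+1 := by exact_mod_cast congrArg (Nat.cast (R := ℝ)) (by omega : n = 2*j+1)
          linarith
        have htv : tden n y = 2*((j+1:ℕ):ℝ) + y := by rw [tden, if_neg hpar, ← hcast]
        have hmem' : gmap n y ∈ Set.Ioc (1/(2*((j+1:ℕ):ℝ)+1)) (1/(2*((j+1:ℕ):ℝ))) := by
          constructor
          · apply one_div_lt_one_div_of_lt htpos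
            rw [htv, ← hcast]; linarith [hy.2, ht.2]
          · apply one_div_le_one_div_of_le (by rw [← hcast]; have := Nat.cast_nonneg (α := ℝ) n; linarith)
            rw [htv]; linarith [hy.1]
        have hval := hT2 (j+1) (by omega) _ hmem'
        rw [hval, hone, htv, show 2*((j+1:ℕ):ℝ) + y - 2*((j+1:ℕ):ℝ) = y from by ring]
        exact hyA'
  -- measurability of branch images
  have hFrep : ∀ n : ℕ, gmap n '' A' =
      (fun α => if n % 2 = 0 then (n:ℝ) + 2 - 1/α else 1/α - ((n:ℝ)+1)) ⁻¹' A'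
        ∩ Set.Ioo (1/((n:ℝ)+2)) (1/((n:ℝ)+1)) := by
    intro n
    ext α
    constructor
    · rintro ⟨y, hy, rfl⟩
      have hyI := hA'sub hy
      refine ⟨?_, gmap_mem hyI⟩
      show (if n % 2 = 0 then (n:ℝ) + 2 - 1/(gmap n y) else 1/(gmap n y) - ((n:ℝ)+1)) ∈ A'
      have h1 : (1:ℝ)/(gmap n y) = tden n y := by rw [gmap, one_div_one_div]
      by_cases h : n % 2 = 0
      · rw [if_pos h, h1, tden, if_pos h, show (n:ℝ)+2 - ((n:ℝ)+2-y) = y from by ring]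
        exact hy
      · rw [if_neg h, h1, tden, if_neg h, show (n:ℝ)+1+y - ((n:ℝ)+1) = y from by ring]
        exact hy
    · rintro ⟨hinv, hIoo⟩
      have hα0 : (0:ℝ) < α := lt_trans (by positivity) hIoo.1
      refine ⟨_, hinv, ?_⟩
      by_cases h : n % 2 = 0
      · simp only [if_pos h]
        rw [gmap, tden, if_pos h,
          show (n:ℝ)+2 - ((n:ℝ)+2 - 1/α) = 1/α from by ring, one_div_one_div]
      · simp only [if_neg h]
        rw [gmap, tden, if_neg h,
          show (n:ℝ)+1 + (1/α - ((n:ℝ)+1)) = 1/α from by ring, one_div_one_div]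
  have hFmeas : ∀ n, MeasurableSet (gmap n '' A') := by
    intro n
    rw [hFrep n]
    refine MeasurableSet.inter ?_ measurableSet_Ioo
    have hm : Measurable (fun α : ℝ => if n % 2 = 0 then (n:ℝ) + 2 - 1/α else 1/α - ((n:ℝ)+1)) := by
      by_cases h : n % 2 = 0 <;> simp only [h, if_true, if_false, reduceIte] <;> fun_prop
    exact hm hA'
  have hFsub : ∀ n, gmap n '' A' ⊆ Set.Ioc 0 1 := by
    rintro n α ⟨y, hy, rfl⟩
    have hyI := hA'sub hy
    have ht := tden_mem (n := n) hyI
    have htpos : (0:ℝ) < tden n y := lt_trans (by positivity) ht.1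
    constructor
    · rw [gmap]; positivity
    · rw [gmap, div_le_one htpos]
      have := Nat.cast_nonneg (α := ℝ) n
      linarith [ht.1]
  -- disjointness
  have hdisjaux : ∀ m n : ℕ, m < n → Disjoint (gmap m '' A') (gmap n '' A') := by
    intro m n hmn
    rw [Set.disjoint_left]
    rintro a ⟨y, hy, rfl⟩ ⟨z, hz, hza⟩
    have h1 := gmap_mem (n := m) (hA'sub hy)
    have h2 := gmap_mem (n := n) (hA'sub hz)
    rw [hza] at h2
    have hle : 1/((n:ℝ)+1) ≤ 1/((m:ℝ)+2) := by
      apply one_div_le_one_div_of_le (by positivity)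
      have h3 : m + 2 ≤ n + 1 := by omega
      exact_mod_cast h3
    linarith [h1.1, h2.2]
  have hdisj : Pairwise (Function.onFun Disjoint (fun n => gmap n '' A')) := by
    intro m n hmn
    rcases lt_or_gt_of_ne hmn with h | h
    · exact hdisjaux m n h
    · exact (hdisjaux n m h).symm
  -- change of variables on each branch
  have hbranch_meas : ∀ n : ℕ, muT (gmap n '' A') =
      ∫⁻ y in A', ENNReal.ofReal (1/(tden n y - 1) - 1/(tden n y + 1)) := by
    intro n
    rw [muT_apply _ (hFmeas n) (hFsub n)]
    have hderiv : ∀ y ∈ A', HasDerivWithinAt (gmap n)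
        ((if n % 2 = 0 then (1:ℝ) else -1) * (1/(tden n y)^2)) A' y := by
      intro y hy
      have hyI := hA'sub hy
      have ht := tden_mem (n := n) hyI
      have htne : tden n y ≠ 0 := (lt_trans (by positivity) ht.1).ne'
      by_cases h : n % 2 = 0
      · rw [if_pos h]
        have hb : HasDerivAt (fun y : ℝ => (n:ℝ) + 2 - y) (-1) y := by
          simpa using (hasDerivAt_id y).const_sub ((n:ℝ)+2)
        have hne : (n:ℝ) + 2 - y ≠ 0 := by rw [tden, if_pos h] at htne; exact htne
        have hd := hb.inv hne
        have heq : (1:ℝ) * (1/(tden n y)^2) = -(-1)/(((n:ℝ)+2-y)^2) := by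
          rw [tden, if_pos h]; ring
        have hfun : gmap n = fun z : ℝ => ((n:ℝ)+2-z)⁻¹ := by
          funext z; rw [gmap, tden, if_pos h, one_div]
        rw [heq, hfun]
        exact hd.hasDerivWithinAt
      · rw [if_neg h]
        have hb : HasDerivAt (fun y : ℝ => (n:ℝ) + 1 + y) 1 y := by
          simpa using (hasDerivAt_id y).const_add ((n:ℝ)+1)
        have hne : (n:ℝ) + 1 + y ≠ 0 := by rw [tden, if_neg h] at htne; exact htne
        have hd := hb.inv hne
        have heq : (-1:ℝ) * (1/(tden n y)^2) = -1/(((n:ℝ)+1+y)^2) := by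
          rw [tden, if_neg h]; ring
        have hfun : gmap n = fun z : ℝ => ((n:ℝ)+1+z)⁻¹ := by
          funext z; rw [gmap, tden, if_neg h, one_div]
        rw [heq, hfun]
        exact hd.hasDerivWithinAt
    have hinj : Set.InjOn (gmap n) A' := by
      intro a ha b hb hab
      have hta := tden_mem (n := n) (hA'sub ha)
      have htb := tden_mem (n := n) (hA'sub hb)
      have h0 : (0:ℝ) < (n:ℝ)+1 := by positivity
      have hane : tden n a ≠ 0 := (lt_trans h0 hta.1).ne'
      have hbne : tden n b ≠ 0 := (lt_trans h0 htb.1).ne'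
      have heq : tden n a = tden n b := by
        rw [gmap, gmap] at hab
        field_simp at hab
        linarith
      rw [tden, tden] at heq
      split_ifs at heq <;> linarith
    rw [my_lintegral_image hA' hderiv hinj]
    refine setLIntegral_congr_fun_ae hA' (ae_of_all _ ?_)
    intro y hy
    have hyI := hA'sub hy
    have ht1 : (1:ℝ) < tden n y := tden_pos hyI
    have ht0 : (0:ℝ) < tden n y := lt_trans one_pos ht1
    set t := tden n y with htdef
    have habs : |(if n % 2 = 0 then (1:ℝ) else -1) * (1/t^2)| = 1/t^2 := by
      have hx : |1/t^2| = 1/t^2 := abs_of_pos (by positivity)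
      split_ifs <;> simp [abs_mul, hx] <;> positivity
    rw [habs, ← ENNReal.ofReal_mul (by positivity)]
    congr 1
    have hg : gmap n y = 1/t := rfl
    rw [hg]
    have h2 : 1/t - 1 ≠ 0 := by
      have : 1/t < 1 := by rw [div_lt_one ht0]; exact ht1
      linarith
    have h3 : t - 1 ≠ 0 := by linarith
    have h4 : t + 1 ≠ 0 := by linarith
    have htne : t ≠ 0 := ht0.ne'
    have h5 : (1:ℝ) - t ≠ 0 := by linarith
    have e1 : 1/t + 1 = (1+t)/t := by field_simp
    have e2 : 1/t - 1 = (1-t)/t := by field_simp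
    rw [e1, e2, one_div_div, one_div_div]
    rw [div_sub_div _ _ (by linarith : (1:ℝ)+t ≠ 0) h5, div_sub_div _ _ h3 h4]
    rw [div_mul_div_comm, div_eq_div_iff
      (mul_ne_zero (pow_ne_zero 2 htne) (mul_ne_zero (by linarith) h5))
      (mul_ne_zero h3 h4)]
    ring
  -- the pointwise sum identity
  have hsum : ∀ y ∈ Set.Ioo (0:ℝ) 1,
      ∑' n, ENNReal.ofReal (1/(tden n y - 1) - 1/(tden n y + 1)) =
        ENNReal.ofReal (1/(y+1) - 1/(y-1)) := by
    intro y hy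
    obtain ⟨hy0, hy1⟩ := hy
    set c : ℕ → ℝ := fun n => if n % 2 = 0 then 1/((n:ℝ)+1-y) else 1/((n:ℝ)+y) with hc
    have hdenpos : ∀ n : ℕ, ¬ (n % 2 = 0) → (0:ℝ) < (n:ℝ)+y := by
      intro n hn
      have : 1 ≤ n := by omega
      have : (1:ℝ) ≤ n := by exact_mod_cast this
      linarith
    have hmono : ∀ n, c (n+2) ≤ c n := by
      intro n
      simp only [hc, Nat.add_mod_right]
      by_cases h : n % 2 = 0
      · rw [if_pos h, if_pos h]
        apply one_div_le_one_div_of_le (by linarith [Nat.cast_nonneg (α := ℝ) n])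
        push_cast; linarith
      · rw [if_neg h, if_neg h]
        apply one_div_le_one_div_of_le (hdenpos n h)
        push_cast; linarith
    have hcpos : ∀ n, 0 ≤ c n := by
      intro n
      simp only [hc]
      by_cases h : n % 2 = 0
      · rw [if_pos h]
        apply le_of_lt
        apply div_pos one_pos
        linarith [Nat.cast_nonneg (α := ℝ) n]
      · rw [if_neg h]
        exact le_of_lt (div_pos one_pos (hdenpos n h))
    have hlim : Tendsto c atTop (𝓝 0) := by
      apply squeeze_zero' (Eventually.of_forall hcpos)
        (g := fun n : ℕ => 1/(n:ℝ)) ?_ tendsto_one_div_atTop_nhds_zero_nat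
      filter_upwards [eventually_ge_atTop 1] with n hn
      have hn' : (1:ℝ) ≤ n := by exact_mod_cast hn
      simp only [hc]
      by_cases h : n % 2 = 0
      · rw [if_pos h]
        exact one_div_le_one_div_of_le (by linarith) (by linarith)
      · rw [if_neg h]
        exact one_div_le_one_div_of_le (by linarith) (by linarith)
    have hHS := telescope2 c hmono hlim
    have heq : ∀ n : ℕ, ENNReal.ofReal (1/(tden n y - 1) - 1/(tden n y + 1)) =
        ENNReal.ofReal (c n - c (n+2)) := by
      intro n
      congr 1
      simp only [hc, Nat.add_mod_right]
      rw [tden]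
      by_cases h : n % 2 = 0
      · rw [if_pos h, if_pos h, if_pos h]
        push_cast
        rw [show (n:ℝ)+2-y-1 = (n:ℝ)+1-y from by ring,
          show (n:ℝ)+2-y+1 = (n:ℝ)+2+1-y from by ring]
      · rw [if_neg h, if_neg h, if_neg h]
        push_cast
        rw [show (n:ℝ)+1+y-1 = (n:ℝ)+y from by ring,
          show (n:ℝ)+1+y+1 = (n:ℝ)+2+y from by ring]
    calc ∑' n, ENNReal.ofReal (1/(tden n y - 1) - 1/(tden n y + 1))
        = ∑' n, ENNReal.ofReal (c n - c (n+2)) := tsum_congr heq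
      _ = ENNReal.ofReal (∑' n, (c n - c (n+2))) :=
          (ENNReal.ofReal_tsum_of_nonneg (fun n => sub_nonneg.2 (hmono n)) hHS.summable).symm
      _ = ENNReal.ofReal (c 0 + c 1) := by rw [hHS.tsum_eq]
      _ = ENNReal.ofReal (1/(y+1) - 1/(y-1)) := by
          congr 1
          simp only [hc]
          norm_num
          have h1 : (1:ℝ) - y ≠ 0 := by linarith
          have h2 : (1:ℝ) + y ≠ 0 := by linarith
          have h3 : y - 1 ≠ 0 := by linarith
          have h4 : y + 1 ≠ 0 := by linarith
          field_simp
          ring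
  -- put everything together
  have htden_meas : ∀ n : ℕ, Measurable (tden n) := by
    intro n
    unfold tden
    by_cases h : n % 2 = 0 <;> simp only [h, if_true, if_false, reduceIte] <;> fun_prop
  calc muT (T ⁻¹' A ∩ Set.Ioc 0 1)
      = muT (T ⁻¹' A' ∩ Set.Ioc 0 1) := hpre
    _ = muT (⋃ n, gmap n '' A') := by rw [decomp]
    _ = ∑' n, muT (gmap n '' A') := measure_iUnion hdisj hFmeas
    _ = ∑' n, ∫⁻ y in A', ENNReal.ofReal (1/(tden n y - 1) - 1/(tden n y + 1)) :=
        tsum_congr hbranch_meas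
    _ = ∫⁻ y in A', ∑' n, ENNReal.ofReal (1/(tden n y - 1) - 1/(tden n y + 1)) := by
        rw [← lintegral_tsum]
        intro n
        apply Measurable.aemeasurable
        apply ENNReal.measurable_ofReal.comp
        have := htden_meas n
        fun_prop
    _ = ∫⁻ y in A', ENNReal.ofReal (1/(y+1) - 1/(y-1)) := by
        refine setLIntegral_congr_fun_ae hA' (ae_of_all _ ?_)
        intro y hy
        exact hsum y (hA'sub hy)
    _ = muT A' := (muT_apply A' hA' (subset_trans hA'sub Set.Ioo_subset_Ioc_self)).symm
    _ = muT A := hAA'.symm
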